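/- (Normalized-IGM invariance) Let A be a pairwise reciprocal matrix of size n ≥ 1 and let r ∈ ℝ, r ≠ 0, be such that Ḡ + r·J is invertible. Set v = (Ḡ + r·J)⁻¹.mulVec 1. Then ∑ᵢ v i ≠ 0 and (1/∑ᵢ v i) • v = w*, where w* = (1/c) • (G⁻¹.mulVec 1) with c = ∑ᵢ ∑ⱼ (G⁻¹) i j; i.e., the normalized solution does not depend on the choice of the nonzero shift r. -/

import Mathlib

open Matrix BigOperators

/-- A pairwise reciprocal matrix (PRM): all entries positive and `A i j * A j i = 1`. -/
def IsPRM {n : ℕ} (A : Matrix (Fin n) (Fin n) ℝ) : Prop :=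
  ∀ i j, 0 < A i j ∧ A i j * A j i = 1

/-- The matrix `Ḡ` with diagonal `(n-1) + ∑_{k ≠ i} (A k i)^2` and
off-diagonal `-(A i j + A j i)`. -/
noncomputable def Gbar {n : ℕ} (A : Matrix (Fin n) (Fin n) ℝ) :
    Matrix (Fin n) (Fin n) ℝ :=
  Matrix.of fun i j =>
    if i = j then ((n : ℝ) - 1) + ∑ k ∈ Finset.univ.filter (fun k => k ≠ i), (A k i) ^ 2
    else -(A i j + A j i)

/-- The all-ones matrix `J`. -/
noncomputable def Jmat (n : ℕ) : Matrix (Fin n) (Fin n) ℝ :=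
  Matrix.of fun _ _ => 1

/-- `G = Ḡ + J`. -/
noncomputable def Gmat {n : ℕ} (A : Matrix (Fin n) (Fin n) ℝ) :
    Matrix (Fin n) (Fin n) ℝ :=
  Gbar A + Jmat n

/-- The weighted least squares objective `f(w) = ∑ i ∑ j (w i - A i j * w j)^2`. -/
noncomputable def wls {n : ℕ} (A : Matrix (Fin n) (Fin n) ℝ) (w : Fin n → ℝ) : ℝ :=
  ∑ i, ∑ j, (w i - A i j * w j) ^ 2
lemma prm_diag {n : ℕ} {A : Matrix (Fin n) (Fin n) ℝ} (hA : IsPRM A) (i : Fin n) :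
    A i i = 1 := by
  have h1 := (hA i i).1
  have h2 := (hA i i).2
  nlinarith

lemma gbar_diag {n : ℕ} {A : Matrix (Fin n) (Fin n) ℝ} (hA : IsPRM A) (i : Fin n) :
    (((n:ℝ)-1) + ∑ k ∈ Finset.univ.filter (fun k => k ≠ i), (A k i)^2)
      = ((n:ℝ) - 2) + ∑ k, A k i ^ 2 := by
  have h : ∑ k ∈ Finset.univ.filter (fun k => k ≠ i), (A k i)^2
      = (∑ k, A k i ^ 2) - A i i ^ 2 := by
    rw [Finset.filter_ne', Finset.sum_erase_eq_sub (Finset.mem_univ i)]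
  rw [h, prm_diag hA]; ring


lemma quadform {n : ℕ} {A : Matrix (Fin n) (Fin n) ℝ} (hA : IsPRM A) (x : Fin n → ℝ) :
    x ⬝ᵥ (Gbar A).mulVec x = wls A x := by
  have hAii := prm_diag hA
  have hmul : ∀ i, (Gbar A).mulVec x i
      = ((n:ℝ) + ∑ k, A k i ^ 2) * x i - ∑ j, (A i j + A j i) * x j := by
    intro i
    have hterm : ∀ j, Gbar A i j * x j
        = (if i = j then ((n:ℝ) + ∑ k, A k i ^ 2) * x j else 0)
          - (A i j + A j i) * x j := by
      intro j
      by_cases h : i = j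
      · subst h
        simp only [Gbar, Matrix.of_apply, if_pos rfl]
        rw [gbar_diag hA, hAii]
        simp
        ring
      · simp only [Gbar, Matrix.of_apply, if_neg h]
        ring
    simp only [Matrix.mulVec, dotProduct]
    rw [Finset.sum_congr rfl (fun j _ => hterm j), Finset.sum_sub_distrib,
      Finset.sum_ite_eq]
    simp
  have step1 : x ⬝ᵥ (Gbar A).mulVec x
      = (∑ i, ((n:ℝ) + ∑ k, A k i ^ 2) * x i ^ 2)
        - ∑ i, ∑ j, (A i j + A j i) * (x i * x j) := by
    simp only [dotProduct]
    rw [← Finset.sum_sub_distrib]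
    refine Finset.sum_congr rfl fun i _ => ?_
    rw [hmul i, mul_sub, Finset.mul_sum]
    congr 1
    · ring
    · exact Finset.sum_congr rfl fun j _ => by ring
  have step2 : wls A x
      = (∑ i, ∑ j, (x i ^ 2 + A i j ^ 2 * x j ^ 2))
        - ∑ i, ∑ j, (2 * A i j) * (x i * x j) := by
    unfold wls
    rw [← Finset.sum_sub_distrib]
    refine Finset.sum_congr rfl fun i _ => ?_
    rw [← Finset.sum_sub_distrib]
    exact Finset.sum_congr rfl fun j _ => by ring
  have swap : ∑ i, ∑ j, A j i * (x i * x j) = ∑ i, ∑ j, A i j * (x i * x j) := by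
    rw [Finset.sum_comm]
    exact Finset.sum_congr rfl fun i _ => Finset.sum_congr rfl fun j _ => by ring
  have step3 : ∑ i, ∑ j, (A i j + A j i) * (x i * x j)
      = ∑ i, ∑ j, (2 * A i j) * (x i * x j) := by
    have e1 : ∀ i : Fin n, ∑ j, (A i j + A j i) * (x i * x j)
        = (∑ j, A i j * (x i * x j)) + ∑ j, A j i * (x i * x j) := by
      intro i
      rw [← Finset.sum_add_distrib]
      exact Finset.sum_congr rfl fun j _ => by ring
    have e2 : ∀ i : Fin n, ∑ j, (2 * A i j) * (x i * x j)
        = (∑ j, A i j * (x i * x j)) + ∑ j, A i j * (x i * x j) := by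
      intro i
      rw [← Finset.sum_add_distrib]
      exact Finset.sum_congr rfl fun j _ => by ring
    rw [Finset.sum_congr rfl fun i _ => e1 i, Finset.sum_congr rfl fun i _ => e2 i,
      Finset.sum_add_distrib, Finset.sum_add_distrib, swap]
  have step4 : ∑ i, ∑ j : Fin n, (x i ^ 2 + A i j ^ 2 * x j ^ 2)
      = ∑ i, ((n:ℝ) + ∑ k, A k i ^ 2) * x i ^ 2 := by
    have e1 : ∀ i : Fin n, ∑ j : Fin n, (x i ^ 2 + A i j ^ 2 * x j ^ 2)
        = (n:ℝ) * x i ^ 2 + ∑ j, A i j ^ 2 * x j ^ 2 := by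
      intro i
      rw [Finset.sum_add_distrib, Finset.sum_const, Finset.card_univ, Fintype.card_fin,
        nsmul_eq_mul]
    rw [Finset.sum_congr rfl fun i _ => e1 i, Finset.sum_add_distrib, Finset.sum_comm]
    have e2 : ∀ j : Fin n, ∑ i, A i j ^ 2 * x j ^ 2 = (∑ k, A k j ^ 2) * x j ^ 2 := by
      intro j; rw [Finset.sum_mul]
    rw [Finset.sum_congr rfl fun j _ => e2 j, ← Finset.sum_add_distrib]
    exact Finset.sum_congr rfl fun i _ => by ring
  rw [step1, step2, step3, step4]

lemma wls_nonneg {n : ℕ} (A : Matrix (Fin n) (Fin n) ℝ) (x : Fin n → ℝ) :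
    0 ≤ wls A x := by
  unfold wls; positivity

lemma eq_zero_of_wls_zero {n : ℕ} (hn : 1 ≤ n) {A : Matrix (Fin n) (Fin n) ℝ}
    (hA : IsPRM A) {x : Fin n → ℝ} (h0 : wls A x = 0) (hs : ∑ i, x i = 0) :
    x = 0 := by
  have key : ∀ i j, x i = A i j * x j := by
    intro i j
    have h1 : ∀ i ∈ (Finset.univ : Finset (Fin n)), 0 ≤ ∑ j, (x i - A i j * x j) ^ 2 := by
      intro i _; positivity
    have h2 := (Finset.sum_eq_zero_iff_of_nonneg h1).1 h0 i (Finset.mem_univ i)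
    have h3 : ∀ j ∈ (Finset.univ : Finset (Fin n)), 0 ≤ (x i - A i j * x j) ^ 2 := by
      intro j _; positivity
    have h4 := (Finset.sum_eq_zero_iff_of_nonneg h3).1 h2 j (Finset.mem_univ j)
    have := sq_eq_zero_iff.1 h4
    linarith
  have j0 : Fin n := ⟨0, hn⟩
  have hx : ∀ i, x i = A i j0 * x j0 := fun i => key i j0
  have hsum : (∑ i, A i j0) * x j0 = 0 := by
    rw [Finset.sum_mul, ← hs]
    exact Finset.sum_congr rfl fun i _ => (hx i).symm
  have hpos : 0 < ∑ i, A i j0 :=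
    Finset.sum_pos (fun i _ => (hA i j0).1) ⟨j0, Finset.mem_univ j0⟩
  have hxj0 : x j0 = 0 := by
    rcases mul_eq_zero.1 hsum with h | h
    · exact absurd h (ne_of_gt hpos)
    · exact h
  funext i
  simp [hx i, hxj0]

lemma jmat_mulVec {n : ℕ} (x : Fin n → ℝ) :
    (Jmat n).mulVec x = fun _ => ∑ i, x i := by
  funext i
  simp [Jmat, Matrix.mulVec, dotProduct]

lemma quadform_G {n : ℕ} {A : Matrix (Fin n) (Fin n) ℝ} (hA : IsPRM A) (x : Fin n → ℝ) :
    x ⬝ᵥ (Gmat A).mulVec x = wls A x + (∑ i, x i) ^ 2 := by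
  unfold Gmat
  rw [Matrix.add_mulVec, dotProduct_add, quadform hA, jmat_mulVec]
  congr 1
  simp only [dotProduct]
  rw [← Finset.sum_mul]
  ring

lemma gmat_isUnit {n : ℕ} (hn : 1 ≤ n) {A : Matrix (Fin n) (Fin n) ℝ} (hA : IsPRM A) :
    IsUnit (Gmat A) := by
  have hherm : (Gmat A).IsHermitian := by
    unfold Matrix.IsHermitian
    ext i j
    simp only [Matrix.conjTranspose_apply, Gmat, Gbar, Jmat, Matrix.add_apply,
      Matrix.of_apply, star_trivial]
    by_cases h : i = j
    · subst h; simp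
    · rw [if_neg h, if_neg (Ne.symm h)]; ring
  have hpd : (Gmat A).PosDef := by
    refine Matrix.PosDef.of_dotProduct_mulVec_pos hherm fun x hx => ?_
    have hq := quadform_G hA x
    have h1 : 0 ≤ wls A x := wls_nonneg A x
    have h2 : 0 ≤ (∑ i, x i) ^ 2 := sq_nonneg _
    have hne : wls A x + (∑ i, x i) ^ 2 ≠ 0 := by
      intro hzero
      have hw : wls A x = 0 := by linarith [sq_nonneg (∑ i, x i), abs_nonneg (wls A x)]
      have hs : (∑ i, x i) ^ 2 = 0 := by linarith
      exact hx (eq_zero_of_wls_zero hn hA hw (by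
        have := sq_eq_zero_iff.1 hs; exact this))
    simp only [star_trivial, RCLike.re_to_real]
    rw [hq]
    cases' lt_or_eq_of_le (by linarith : (0:ℝ) ≤ wls A x + (∑ i, x i)^2) with h h
    · exact h
    · exact absurd h.symm hne
  have hdet : (Gmat A).det ≠ 0 := ne_of_gt hpd.det_pos
  rw [Matrix.isUnit_iff_isUnit_det]
  exact isUnit_iff_ne_zero.2 hdet


/-- Normalized-IGM invariance: for `r ≠ 0` with `Ḡ + r·J` invertible and
`v = (Ḡ + r·J)⁻¹.mulVec 1`, we have `∑ i, v i ≠ 0` and `(1/∑ i, v i) • v = w*`;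
the normalized solution does not depend on the nonzero shift `r`. -/
theorem nigm_invariance {n : ℕ} (hn : 1 ≤ n)
    (A : Matrix (Fin n) (Fin n) ℝ) (hA : IsPRM A) (r : ℝ) (hr : r ≠ 0)
    (hinv : IsUnit (Gbar A + r • Jmat n)) :
    let v : Fin n → ℝ := (Gbar A + r • Jmat n)⁻¹.mulVec 1
    let c : ℝ := ∑ i, ∑ j, (Gmat A)⁻¹ i j
    (∑ i, v i) ≠ 0 ∧
    (1 / ∑ i, v i) • v = (1 / c) • ((Gmat A)⁻¹.mulVec 1) := by
  intro v c
  set M : Matrix (Fin n) (Fin n) ℝ := Gbar A + r • Jmat n with hM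
  have hdet : IsUnit M.det := (Matrix.isUnit_iff_isUnit_det M).1 hinv
  have hMv : M.mulVec v = 1 := by
    show M.mulVec (M⁻¹.mulVec 1) = 1
    rw [Matrix.mulVec_mulVec, Matrix.mul_nonsing_inv _ hdet, Matrix.one_mulVec]
  set s : ℝ := ∑ i, v i with hsdef
  have hGbarv : (Gbar A).mulVec v = fun _ => 1 - r * s := by
    funext i
    have h1 := congrFun hMv i
    have h2 : M.mulVec v i = (Gbar A).mulVec v i + r * s := by
      rw [hM, Matrix.add_mulVec, Matrix.smul_mulVec, jmat_mulVec]
      simp [hsdef]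
    rw [h2] at h1
    have : (1 : Fin n → ℝ) i = 1 := rfl
    rw [this] at h1
    linarith
  have hGv : (Gmat A).mulVec v = fun _ => 1 - r * s + s := by
    funext i
    unfold Gmat
    rw [Matrix.add_mulVec, jmat_mulVec, hGbarv]
    simp [hsdef]
  have i0 : Fin n := ⟨0, hn⟩
  have hvne : v ≠ 0 := by
    intro h0
    have := congrFun hMv i0
    rw [h0] at this
    simp [Matrix.mulVec_zero] at this
  have hs : s ≠ 0 := by
    intro h0
    have hG1 : (Gbar A).mulVec v = fun _ => 1 := by
      rw [hGbarv, h0]; simp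
    have hw : wls A v = 0 := by
      rw [← quadform hA v, hG1]
      simp only [dotProduct]
      simpa using h0
    exact hvne (eq_zero_of_wls_zero hn hA hw h0)
  set t : ℝ := 1 - r * s + s with htdef
  have ht : t ≠ 0 := by
    intro h0
    have hq := quadform_G hA v
    have : v ⬝ᵥ (Gmat A).mulVec v = 0 := by
      rw [hGv, h0]
      simp [dotProduct]
    rw [this] at hq
    have h1 := wls_nonneg A v
    have h2 : s ^ 2 = 0 := by nlinarith [sq_nonneg s]
    exact hs (pow_eq_zero_iff (by norm_num) |>.1 h2)
  have hGunit := gmat_isUnit hn hA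
  have hGdet : IsUnit (Gmat A).det := (Matrix.isUnit_iff_isUnit_det _).1 hGunit
  have hginv : (Gmat A)⁻¹.mulVec 1 = (1 / t) • v := by
    have h1 : (Gmat A).mulVec ((1 / t) • v) = 1 := by
      rw [Matrix.mulVec_smul, hGv]
      funext i
      simp [← htdef]
      field_simp
    calc (Gmat A)⁻¹.mulVec 1 = (Gmat A)⁻¹.mulVec ((Gmat A).mulVec ((1/t) • v)) := by rw [h1]
      _ = ((Gmat A)⁻¹ * Gmat A).mulVec ((1/t) • v) := Matrix.mulVec_mulVec _ _ _
      _ = (1/t) • v := by rw [Matrix.nonsing_inv_mul _ hGdet, Matrix.one_mulVec]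
  have hc : c = (1 / t) * s := by
    show (∑ i, ∑ j, (Gmat A)⁻¹ i j) = _
    have h1 : ∀ i, ∑ j, (Gmat A)⁻¹ i j = (Gmat A)⁻¹.mulVec 1 i := by
      intro i
      simp [Matrix.mulVec, dotProduct]
    rw [Finset.sum_congr rfl fun i _ => h1 i, hginv]
    simp [Finset.mul_sum, hsdef]
  refine ⟨hs, ?_⟩
  rw [hginv, hc, smul_smul]
  congr 1
  field_simp
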